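/- Let G be a finite subgroup of SL(2,ℂ) with irreducible complex representations R_0,...,R_r (R_0 trivial), and let Q be the 2-dimensional representation from the inclusion G ⊂ SL(2,ℂ). Define the matrix A by R_i ⊗ Q ≅ ⊕_j a_{ij} R_j. Then A is symmetric, i.e. a_{ij} = a_{ji} for all i,j. -/

import Mathlib

open scoped BigOperators

/-- A `2 × 2` complex matrix of determinant `1` and finite order has real trace. -/
lemma trace_real_of_fin_order (M : Matrix (Fin 2) (Fin 2) ℂ) (hdet : M.det = 1)
    (n : ℕ) (hn : 0 < n) (hM : M ^ n = 1) :
    (starRingEnd ℂ) M.trace = M.trace := by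
  -- get an eigenvalue
  obtain ⟨μ, hμ⟩ := Module.End.exists_eigenvalue (M.mulVecLin)
  obtain ⟨v, hv⟩ := hμ.exists_hasEigenvector
  have hv0 : v ≠ 0 := hv.right
  have hMv : M.mulVec v = μ • v := hv.apply_eq_smul
  -- powers
  have hpow : ∀ k : ℕ, (M ^ k).mulVec v = μ ^ k • v := by
    intro k
    induction k with
    | zero => simp
    | succ k ih =>
      rw [pow_succ', pow_succ', ← Matrix.mulVec_mulVec, ih, Matrix.mulVec_smul, hMv,
        smul_smul, mul_comm]
  have hμn : μ ^ n = 1 := by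
    have h1 : μ ^ n • v = v := by rw [← hpow, hM, Matrix.one_mulVec]
    have h2 : (μ ^ n - 1) • v = 0 := by rw [sub_smul, h1, one_smul, sub_self]
    rcases smul_eq_zero.mp h2 with h | h
    · exact sub_eq_zero.mp h
    · exact absurd h hv0
  have hμ0 : μ ≠ 0 := by
    intro h
    rw [h, zero_pow hn.ne'] at hμn
    exact zero_ne_one hμn
  -- det (M - μ • 1) = 0
  have hker : (M - μ • 1).mulVec v = 0 := by
    rw [Matrix.sub_mulVec, hMv, Matrix.smul_mulVec, Matrix.one_mulVec, sub_self]
  have hdet0 : (M - μ • 1).det = 0 := by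
    by_contra h
    have hu : IsUnit (M - μ • 1) := (Matrix.isUnit_iff_isUnit_det _).mpr (IsUnit.mk0 _ h)
    have hinj := Matrix.mulVec_injective_iff_isUnit.mpr hu
    exact hv0 (hinj (by simpa using hker))
  -- quadratic relation
  have hquad : μ ^ 2 - M.trace * μ + 1 = 0 := by
    have h1 := hdet0
    rw [Matrix.det_fin_two] at h1 hdet
    rw [Matrix.trace_fin_two]
    simp only [Matrix.sub_apply, Matrix.smul_apply, Matrix.one_apply_eq,
      Matrix.one_apply_ne (by decide : (0 : Fin 2) ≠ 1),
      Matrix.one_apply_ne (by decide : (1 : Fin 2) ≠ 0), smul_eq_mul, mul_one, mul_zero,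
      sub_zero] at h1
    linear_combination h1 - hdet
  have ht : M.trace = μ + μ⁻¹ := by
    field_simp
    linear_combination -hquad
  -- |μ| = 1 so conj μ = μ⁻¹
  have habs : ‖μ‖ = 1 := by
    have h1 : ‖μ‖ ^ n = 1 := by
      rw [← norm_pow, hμn, norm_one]
    rcases pow_eq_one_iff_cases.mp h1 with h | h | h
    · omega
    · exact h
    · nlinarith [norm_nonneg μ, h.1]
  have hconj : (starRingEnd ℂ) μ = μ⁻¹ := by
    have h1 : μ * (starRingEnd ℂ) μ = 1 := by
      rw [Complex.mul_conj, Complex.normSq_eq_norm_sq, habs]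
      norm_num
    field_simp
    linear_combination h1
  rw [ht, map_add, hconj, map_inv₀, hconj, inv_inv, add_comm]

/-- McKay adjacency matrix of a finite subgroup of `SL(2, ℂ)` is symmetric.
The multiplicities `a i j` of `R_j` in `R_i ⊗ Q` are given by the character
inner-product formula. -/
theorem adjacency_matrix_symm
    (G : Subgroup (Matrix.SpecialLinearGroup (Fin 2) ℂ)) [Fintype G]
    (r : ℕ) (χ : Fin (r + 1) → G → ℂ)
    (htriv : ∀ g : G, χ 0 g = 1)
    (a : Fin (r + 1) → Fin (r + 1) → ℕ)
    (ha : ∀ i j, (a i j : ℂ) = (Fintype.card G : ℂ)⁻¹ *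
      ∑ g : G,
        Matrix.trace ((g : Matrix.SpecialLinearGroup (Fin 2) ℂ) : Matrix (Fin 2) (Fin 2) ℂ)
          * χ i g * (starRingEnd ℂ) (χ j g)) :
    ∀ i j, a i j = a j i := by
  have htr : ∀ g : G, (starRingEnd ℂ)
      (Matrix.trace ((g : Matrix.SpecialLinearGroup (Fin 2) ℂ) : Matrix (Fin 2) (Fin 2) ℂ)) =
      Matrix.trace ((g : Matrix.SpecialLinearGroup (Fin 2) ℂ) : Matrix (Fin 2) (Fin 2) ℂ) := by
    intro g
    apply trace_real_of_fin_order _ (Matrix.SpecialLinearGroup.det_coe _) (Fintype.card G)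
      Fintype.card_pos
    have h1 : g ^ Fintype.card G = 1 := pow_card_eq_one
    calc ((g : Matrix.SpecialLinearGroup (Fin 2) ℂ) : Matrix (Fin 2) (Fin 2) ℂ) ^ Fintype.card G
        = (((g ^ Fintype.card G : G) : Matrix.SpecialLinearGroup (Fin 2) ℂ) :
            Matrix (Fin 2) (Fin 2) ℂ) := by
          rw [SubgroupClass.coe_pow, Matrix.SpecialLinearGroup.coe_pow]
      _ = 1 := by rw [h1]; rfl
  intro i j
  have key : (a i j : ℂ) = (a j i : ℂ) := by
    have h1 : (a j i : ℂ) = (starRingEnd ℂ) (a j i : ℂ) := by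
      rw [Complex.conj_natCast]
    rw [h1, ha j i, ha i j, map_mul, map_inv₀, map_natCast, map_sum]
    congr 1
    apply Finset.sum_congr rfl
    intro g _
    rw [map_mul, map_mul, htr g, Complex.conj_conj]
    ring
  exact_mod_cast key
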